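/- Let Ā ≥ 0 and Ē ≥ 0 be such that ‖A(t)‖ ≤ Ā and ‖E(t)‖ ≤ Ē for all t ∈ [0,T]. Then for every t ∈ [0,T]: ‖h(t)‖ ≤ √T · d² · ‖C‖ · e^{√d (Ā + Ē/λ) T} · (∫₀ᵀ ‖Y(s)‖² ds)^{1/2} + √(dT) · Ē · e^{√d (Ā + Ē/λ) T} · (∫₀ᵀ ‖r(s)‖² ds)^{1/2}. -/

import Mathlib

open Matrix Set intervalIntegral
open scoped Matrix

noncomputable section

/-- Frobenius norm of a real matrix. -/
def frob {m n : Type*} [Fintype m] [Fintype n] (M : Matrix m n ℝ) : ℝ :=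
  Real.sqrt (∑ i, ∑ j, (M i j) ^ 2)

/-- Euclidean norm of a real vector. -/
def evnorm {n : Type*} [Fintype n] (v : n → ℝ) : ℝ :=
  Real.sqrt (∑ i, (v i) ^ 2)

variable {n m : Type*} [Fintype n] [Fintype m]

lemma evnorm_nonneg (v : n → ℝ) : 0 ≤ evnorm v := Real.sqrt_nonneg _

lemma frob_nonneg (M : Matrix m n ℝ) : 0 ≤ frob M := Real.sqrt_nonneg _

lemma evnorm_sq (v : n → ℝ) : evnorm v ^ 2 = ∑ i, (v i) ^ 2 :=
  Real.sq_sqrt (Finset.sum_nonneg fun i _ => sq_nonneg _)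

lemma evnorm_eq_norm (v : n → ℝ) :
    evnorm v = ‖(WithLp.equiv 2 (n → ℝ)).symm v‖ := by
  rw [EuclideanSpace.norm_eq]
  simp [evnorm, Real.norm_eq_abs, sq_abs]

lemma evnorm_add_le (x y : n → ℝ) : evnorm (x + y) ≤ evnorm x + evnorm y := by
  simp only [evnorm_eq_norm]
  exact norm_add_le ((WithLp.equiv 2 (n → ℝ)).symm x) ((WithLp.equiv 2 (n → ℝ)).symm y)

lemma evnorm_neg (x : n → ℝ) : evnorm (-x) = evnorm x := by
  simp only [evnorm_eq_norm]
  exact norm_neg ((WithLp.equiv 2 (n → ℝ)).symm x)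

lemma evnorm_sub_le (x y : n → ℝ) : evnorm (x - y) ≤ evnorm x + evnorm y := by
  rw [sub_eq_add_neg]
  exact (evnorm_add_le x (-y)).trans (by rw [evnorm_neg])

lemma sum_mul_le_evnorm (x y : n → ℝ) : ∑ i, x i * y i ≤ evnorm x * evnorm y :=
  Real.sum_mul_le_sqrt_mul_sqrt _ _ _

lemma evnorm_mulVec_le (B : Matrix m n ℝ) (x : n → ℝ) :
    evnorm (B.mulVec x) ≤ frob B * evnorm x := by
  have key : ∑ i, (B.mulVec x i) ^ 2 ≤ (∑ i, ∑ j, (B i j) ^ 2) * ∑ j, (x j) ^ 2 := by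
    rw [Finset.sum_mul]
    refine Finset.sum_le_sum fun i _ => ?_
    have : B.mulVec x i = ∑ j, B i j * x j := by
      simp [Matrix.mulVec, dotProduct]
    rw [this]
    exact Finset.sum_mul_sq_le_sq_mul_sq _ _ _
  calc evnorm (B.mulVec x) ≤ Real.sqrt ((∑ i, ∑ j, (B i j) ^ 2) * ∑ j, (x j) ^ 2) :=
        Real.sqrt_le_sqrt key
    _ = frob B * evnorm x := Real.sqrt_mul (Finset.sum_nonneg fun i _ =>
        Finset.sum_nonneg fun j _ => sq_nonneg _) _

lemma frob_transpose (M : Matrix m n ℝ) : frob Mᵀ = frob M := by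
  unfold frob
  rw [Finset.sum_comm]
  rfl

lemma frob_smul (c : ℝ) (M : Matrix m n ℝ) : frob (c • M) = |c| * frob M := by
  unfold frob
  have : ∑ i, ∑ j, ((c • M) i j) ^ 2 = c ^ 2 * ∑ i, ∑ j, (M i j) ^ 2 := by
    simp [Finset.mul_sum, mul_pow]
  rw [this, Real.sqrt_mul (sq_nonneg c), Real.sqrt_sq_eq_abs]

lemma frob_eq_evnorm (M : Matrix m n ℝ) :
    frob M = evnorm (fun p : m × n => M p.1 p.2) := by
  unfold frob evnorm
  rw [Fintype.sum_prod_type]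

lemma frob_add_le (M N : Matrix m n ℝ) : frob (M + N) ≤ frob M + frob N := by
  simp only [frob_eq_evnorm]
  exact evnorm_add_le (fun p : m × n => M p.1 p.2) (fun p => N p.1 p.2)

lemma continuousOn_evnorm {g : ℝ → n → ℝ} {s : Set ℝ}
    (hg : ∀ i, ContinuousOn (fun t => g t i) s) :
    ContinuousOn (fun t => evnorm (g t)) s := by
  unfold evnorm
  exact Real.continuous_sqrt.comp_continuousOn
    (continuousOn_finset_sum _ fun i _ => (hg i).pow 2)

lemma integral_le_sqrt_mul_sqrt {T : ℝ} (hT : 0 < T) {g : ℝ → ℝ}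
    (hg : ContinuousOn g (Icc 0 T)) (hg0 : ∀ s ∈ Icc (0:ℝ) T, 0 ≤ g s) :
    ∫ s in (0:ℝ)..T, g s ≤ Real.sqrt T * Real.sqrt (∫ s in (0:ℝ)..T, g s ^ 2) := by
  have huIcc : uIcc (0:ℝ) T = Icc 0 T := uIcc_of_le hT.le
  have hig : IntervalIntegrable g MeasureTheory.volume 0 T :=
    (huIcc ▸ hg : ContinuousOn g (uIcc 0 T)).intervalIntegrable
  have hig2 : IntervalIntegrable (fun s => g s ^ 2) MeasureTheory.volume 0 T :=
    (huIcc ▸ hg.pow 2 : ContinuousOn _ (uIcc 0 T)).intervalIntegrable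
  set I := ∫ s in (0:ℝ)..T, g s with hI
  set J := ∫ s in (0:ℝ)..T, g s ^ 2 with hJ
  have hInn : 0 ≤ I := intervalIntegral.integral_nonneg hT.le hg0
  have hJnn : 0 ≤ J := intervalIntegral.integral_nonneg hT.le fun s _ => sq_nonneg _
  have key : I ^ 2 ≤ T * J := by
    have h0 : 0 ≤ ∫ s in (0:ℝ)..T, (g s - I / T) ^ 2 :=
      intervalIntegral.integral_nonneg hT.le fun s _ => sq_nonneg _
    have hexp : ∫ s in (0:ℝ)..T, (g s - I / T) ^ 2
        = J - 2 * (I / T) * I + (I / T) ^ 2 * T := by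
      have : ∀ s, (g s - I / T) ^ 2 = g s ^ 2 - 2 * (I / T) * g s + (I / T) ^ 2 := by
        intro s; ring
      simp_rw [this]
      rw [intervalIntegral.integral_add ((hig2.sub ((hig.const_mul _))))
          intervalIntegrable_const,
        intervalIntegral.integral_sub hig2 (hig.const_mul _),
        intervalIntegral.integral_const_mul, intervalIntegral.integral_const]
      simp only [smul_eq_mul]
      ring
    have hT' : (T:ℝ) ≠ 0 := ne_of_gt hT
    have h1 : J - 2 * (I / T) * I + (I / T) ^ 2 * T = J - I ^ 2 / T := by
      field_simp; ring
    rw [hexp, h1] at h0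
    have h2 : I ^ 2 / T ≤ J := by linarith
    have h3 : I ^ 2 ≤ J * T := (div_le_iff₀ hT).mp h2
    linarith
  calc I = Real.sqrt (I ^ 2) := (Real.sqrt_sq hInn).symm
    _ ≤ Real.sqrt (T * J) := Real.sqrt_le_sqrt key
    _ = Real.sqrt T * Real.sqrt J := Real.sqrt_mul hT.le _

lemma gronwall_aux {T M : ℝ} (hT : 0 < T) (hM : 0 ≤ M) {φ f : ℝ → ℝ}
    (hφc : ContinuousOn φ (Icc 0 T)) (hfc : ContinuousOn f (Icc 0 T))
    (hf0 : ∀ t ∈ Icc (0:ℝ) T, 0 ≤ f t)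
    (hineq : ∀ t ∈ Icc (0:ℝ) T, φ t ≤ ∫ s in (0:ℝ)..t, (M * φ s + f s)) :
    ∀ t ∈ Icc (0:ℝ) T, φ t ≤ Real.exp (M * T) * ∫ s in (0:ℝ)..T, f s := by
  have huIcc : uIcc (0:ℝ) T = Icc 0 T := uIcc_of_le hT.le
  set G : ℝ → ℝ := fun s => M * φ s + f s with hG
  have hGc : ContinuousOn G (Icc 0 T) := (continuousOn_const.mul hφc).add hfc
  set f₂ : ℝ → ℝ := fun s => Real.exp (-(M * s)) * f s with hf₂def
  have hf₂c : ContinuousOn f₂ (Icc 0 T) :=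
    ((Real.continuous_exp.comp (continuous_const.mul continuous_id).neg).continuousOn).mul hfc
  set v : ℝ → ℝ := fun t => ∫ s in (0:ℝ)..t, G s with hv
  set F₂ : ℝ → ℝ := fun t => ∫ s in (0:ℝ)..t, f₂ s with hF₂
  set w : ℝ → ℝ := fun t => Real.exp (-(M * t)) * v t - F₂ t with hw
  -- interval integrability on subintervals
  have hsub : ∀ x ∈ Icc (0:ℝ) T, Icc (0:ℝ) x ⊆ Icc 0 T := fun x hx =>
    Icc_subset_Icc le_rfl hx.2
  have hGint : ∀ x ∈ Icc (0:ℝ) T, IntervalIntegrable G MeasureTheory.volume 0 x := by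
    intro x hx
    apply ContinuousOn.intervalIntegrable
    rw [uIcc_of_le hx.1]
    exact hGc.mono (hsub x hx)
  have hf₂int : ∀ x ∈ Icc (0:ℝ) T, IntervalIntegrable f₂ MeasureTheory.volume 0 x := by
    intro x hx
    apply ContinuousOn.intervalIntegrable
    rw [uIcc_of_le hx.1]
    exact hf₂c.mono (hsub x hx)
  have hfint : ∀ x ∈ Icc (0:ℝ) T, IntervalIntegrable f MeasureTheory.volume 0 x := by
    intro x hx
    apply ContinuousOn.intervalIntegrable
    rw [uIcc_of_le hx.1]
    exact hfc.mono (hsub x hx)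
  -- continuity of primitives
  have hvc : ContinuousOn v (Icc 0 T) := by
    rw [← huIcc]
    exact intervalIntegral.continuousOn_primitive_interval
      (huIcc ▸ (hGc.integrableOn_Icc))
  have hF₂c : ContinuousOn F₂ (Icc 0 T) := by
    rw [← huIcc]
    exact intervalIntegral.continuousOn_primitive_interval
      (huIcc ▸ (hf₂c.integrableOn_Icc))
  have hwc : ContinuousOn w (Icc 0 T) :=
    (((Real.continuous_exp.comp (continuous_const.mul continuous_id).neg).continuousOn).mul
      hvc).sub hF₂c
  -- derivative of w on interior
  have hIoo : interior (Icc (0:ℝ) T) = Ioo 0 T := interior_Icc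
  have hwderiv : ∀ x ∈ Ioo (0:ℝ) T,
      HasDerivAt w (Real.exp (-(M * x)) * (M * (φ x - v x))) x := by
    intro x hx
    have hxIcc : x ∈ Icc (0:ℝ) T := Ioo_subset_Icc_self hx
    have hGx : ContinuousAt G x := hGc.continuousAt (Icc_mem_nhds hx.1 hx.2)
    have hf₂x : ContinuousAt f₂ x := hf₂c.continuousAt (Icc_mem_nhds hx.1 hx.2)
    have hGmeas : StronglyMeasurableAtFilter G (nhds x) MeasureTheory.volume :=
      (hGc.mono Ioo_subset_Icc_self).stronglyMeasurableAtFilter isOpen_Ioo x hx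
    have hf₂meas : StronglyMeasurableAtFilter f₂ (nhds x) MeasureTheory.volume :=
      (hf₂c.mono Ioo_subset_Icc_self).stronglyMeasurableAtFilter isOpen_Ioo x hx
    have hv' : HasDerivAt v (G x) x :=
      intervalIntegral.integral_hasDerivAt_right (hGint x hxIcc) hGmeas hGx
    have hF₂' : HasDerivAt F₂ (f₂ x) x :=
      intervalIntegral.integral_hasDerivAt_right (hf₂int x hxIcc) hf₂meas hf₂x
    have hexp' : HasDerivAt (fun t => Real.exp (-(M * t))) (-M * Real.exp (-(M * x))) x := by
      have h1 : HasDerivAt (fun t : ℝ => -(M * t)) (-M) x := by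
        simpa [mul_comm] using (hasDerivAt_mul_const (-M) : HasDerivAt (fun t : ℝ => t * -M) (-M) x)
      simpa [mul_comm] using h1.exp
    have := (hexp'.mul hv').sub hF₂'
    refine this.congr_deriv ?_
    simp only [hG, hf₂def]
    ring
  -- w is antitone
  have hwanti : AntitoneOn w (Icc 0 T) := by
    apply antitoneOn_of_deriv_nonpos (convex_Icc 0 T) hwc
    · rw [hIoo]
      exact fun x hx => ((hwderiv x hx).differentiableAt).differentiableWithinAt
    · rw [hIoo]
      intro x hx
      rw [(hwderiv x hx).deriv]
      have hφv : φ x ≤ v x := hineq x (Ioo_subset_Icc_self hx)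
      have : M * (φ x - v x) ≤ 0 := mul_nonpos_of_nonneg_of_nonpos hM (by linarith)
      exact mul_nonpos_of_nonneg_of_nonpos (Real.exp_pos _).le this
  intro t ht
  have hw0 : w 0 = 0 := by
    simp [hw, hv, hF₂, intervalIntegral.integral_same]
  have hwt : w t ≤ 0 := by
    rw [← hw0]
    exact hwanti (left_mem_Icc.mpr hT.le) ht ht.1
  -- unpack: exp(-(M t)) * v t ≤ F₂ t
  have h1 : Real.exp (-(M * t)) * v t ≤ F₂ t := by
    simpa [hw, sub_nonpos] using hwt
  have h2 : F₂ t ≤ ∫ s in (0:ℝ)..t, f s := by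
    apply intervalIntegral.integral_mono_on ht.1 (hf₂int t ht) (hfint t ht)
    intro s hs
    have hs' : s ∈ Icc (0:ℝ) T := hsub t ht hs
    have : Real.exp (-(M * s)) ≤ 1 := by
      rw [Real.exp_le_one_iff]
      have := mul_nonneg hM hs.1
      linarith
    calc f₂ s = Real.exp (-(M * s)) * f s := rfl
      _ ≤ 1 * f s := mul_le_mul_of_nonneg_right this (hf0 s hs')
      _ = f s := one_mul _
  have h3 : ∫ s in (0:ℝ)..t, f s ≤ ∫ s in (0:ℝ)..T, f s := by
    have hsplit : (∫ s in (0:ℝ)..t, f s) + ∫ s in t..T, f s = ∫ s in (0:ℝ)..T, f s := by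
      apply intervalIntegral.integral_add_adjacent_intervals (hfint t ht)
      apply ContinuousOn.intervalIntegrable
      rw [uIcc_of_le ht.2]
      exact hfc.mono (Icc_subset_Icc ht.1 le_rfl)
    have hnn : 0 ≤ ∫ s in t..T, f s :=
      intervalIntegral.integral_nonneg ht.2 fun s hs =>
        hf0 s ⟨le_trans ht.1 hs.1, hs.2⟩
    linarith
  have hFnn : 0 ≤ ∫ s in (0:ℝ)..T, f s :=
    intervalIntegral.integral_nonneg hT.le hf0
  have h4 : v t ≤ Real.exp (M * t) * ∫ s in (0:ℝ)..T, f s := by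
    have := le_trans h1 (le_trans h2 h3)
    have hpos : (0:ℝ) < Real.exp (-(M * t)) := Real.exp_pos _
    calc v t = Real.exp (M * t) * (Real.exp (-(M * t)) * v t) := by
          rw [← mul_assoc, ← Real.exp_add]; simp
      _ ≤ Real.exp (M * t) * ∫ s in (0:ℝ)..T, f s :=
          mul_le_mul_of_nonneg_left this (Real.exp_pos _).le
  have h5 : Real.exp (M * t) ≤ Real.exp (M * T) :=
    Real.exp_le_exp.mpr (mul_le_mul_of_nonneg_left ht.2 hM)
  calc φ t ≤ v t := hineq t ht
    _ ≤ Real.exp (M * t) * ∫ s in (0:ℝ)..T, f s := h4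
    _ ≤ Real.exp (M * T) * ∫ s in (0:ℝ)..T, f s :=
        mul_le_mul_of_nonneg_right h5 hFnn

/-- a priori bound on the adjoint variable `h`:
`‖h(t)‖ ≤ √T d² ‖C‖ e^{√d(Ā+Ē/λ)T} (∫₀ᵀ‖Y‖²)^{1/2} + √(dT) Ē e^{√d(Ā+Ē/λ)T} (∫₀ᵀ‖r‖²)^{1/2}`. -/
theorem statement9
    (d d' : ℕ) (hd : 1 ≤ d) (hd' : 1 ≤ d') (T : ℝ) (hT : 0 < T) (lam : ℝ) (hlam : 0 < lam)
    (C : Matrix (Fin d') (Fin d) ℝ)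
    (A : ℝ → Matrix (Fin d) (Fin d) ℝ)
    (r : ℝ → Fin d → ℝ) (Y : ℝ → Fin d' → ℝ)
    (hA : ∀ i j, ContinuousOn (fun t => A t i j) (Icc 0 T))
    (hr : ∀ i, ContinuousOn (fun t => r t i) (Icc 0 T))
    (hY : ∀ i, ContinuousOn (fun t => Y t i) (Icc 0 T))
    (Q : Matrix (Fin d) (Fin d) ℝ) (hQ : Q.PosSemidef)
    (E : ℝ → Matrix (Fin d) (Fin d) ℝ)
    (hE0 : E 0 = Q)
    (hE : ∀ t ∈ Icc (0:ℝ) T, ∀ i j,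
      HasDerivAt (fun s => E s i j)
        ((Cᵀ * C - (A t)ᵀ * E t - E t * A t - (1 / lam) • (E t * E t)) i j) t)
    (h : ℝ → Fin d → ℝ)
    (hh0 : h 0 = 0)
    (hh : ∀ t ∈ Icc (0:ℝ) T, ∀ i,
      HasDerivAt (fun s => h s i)
        ((-(((A t)ᵀ + (1 / lam) • E t).mulVec (h t))
          - (Cᵀ.mulVec (Y t) + (E t).mulVec (r t))) i) t)
    (Abar Ebar : ℝ) (hAbar : 0 ≤ Abar) (hEbar : 0 ≤ Ebar)
    (hAb : ∀ t ∈ Icc (0:ℝ) T, frob (A t) ≤ Abar)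
    (hEb : ∀ t ∈ Icc (0:ℝ) T, frob (E t) ≤ Ebar) :
    ∀ t ∈ Icc (0:ℝ) T,
      evnorm (h t) ≤
        Real.sqrt T * (d : ℝ) ^ 2 * frob C *
            Real.exp (Real.sqrt d * (Abar + Ebar / lam) * T) *
            Real.sqrt (∫ s in (0:ℝ)..T, evnorm (Y s) ^ 2)
        + Real.sqrt (d * T) * Ebar *
            Real.exp (Real.sqrt d * (Abar + Ebar / lam) * T) *
            Real.sqrt (∫ s in (0:ℝ)..T, evnorm (r s) ^ 2) := by
  have hM : 0 ≤ Abar + Ebar / lam := add_nonneg hAbar (div_nonneg hEbar hlam.le)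
  set M : ℝ := Abar + Ebar / lam with hMdef
  set D : ℝ → Fin d → ℝ := fun t =>
    -(((A t)ᵀ + (1 / lam) • E t).mulVec (h t)) - (Cᵀ.mulVec (Y t) + (E t).mulVec (r t)) with hD
  have hhc : ∀ i, ContinuousOn (fun t => h t i) (Icc 0 T) := fun i t ht =>
    ((hh t ht i).continuousAt).continuousWithinAt
  have hEc : ∀ i j, ContinuousOn (fun t => E t i j) (Icc 0 T) := fun i j t ht =>
    ((hE t ht i j).continuousAt).continuousWithinAt
  have hDc : ∀ i, ContinuousOn (fun t => D t i) (Icc 0 T) := by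
    intro i
    have heq : (fun t => D t i) = fun t =>
        -(∑ j, ((A t) j i + (1 / lam) * E t i j) * h t j)
        - ((∑ j, C j i * Y t j) + ∑ j, E t i j * r t j) := by
      funext t
      simp [hD, Matrix.mulVec, dotProduct, Matrix.transpose_apply, Matrix.smul_apply,
        Matrix.add_apply, Pi.add_apply, Pi.sub_apply, Pi.neg_apply, smul_eq_mul]
    rw [heq]
    apply ContinuousOn.sub
    · exact (continuousOn_finset_sum _ fun j _ =>
        ((hA j i).add (continuousOn_const.mul (hEc i j))).mul (hhc j)).neg
    · exact (continuousOn_finset_sum _ fun j _ =>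
        continuousOn_const.mul (hY j)).add
        (continuousOn_finset_sum _ fun j _ => (hEc i j).mul (hr j))
  set φ : ℝ → ℝ := fun t => evnorm (h t) with hφ
  set f₀ : ℝ → ℝ := fun t => frob C * evnorm (Y t) + Ebar * evnorm (r t) with hf₀
  have hφc : ContinuousOn φ (Icc 0 T) := continuousOn_evnorm hhc
  have hf₀c : ContinuousOn f₀ (Icc 0 T) :=
    (continuousOn_const.mul (continuousOn_evnorm hY)).add
      (continuousOn_const.mul (continuousOn_evnorm hr))
  have hC0 : 0 ≤ frob C := frob_nonneg C
  have hf₀0 : ∀ t ∈ Icc (0:ℝ) T, 0 ≤ f₀ t := fun t _ =>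
    add_nonneg (mul_nonneg hC0 (evnorm_nonneg _)) (mul_nonneg hEbar (evnorm_nonneg _))
  -- FTC: components of h are integrals of D
  have hsub : ∀ t ∈ Icc (0:ℝ) T, Icc (0:ℝ) t ⊆ Icc 0 T := fun t ht =>
    Icc_subset_Icc le_rfl ht.2
  have hDint : ∀ t ∈ Icc (0:ℝ) T, ∀ i,
      IntervalIntegrable (fun s => D s i) MeasureTheory.volume 0 t := by
    intro t ht i
    apply ContinuousOn.intervalIntegrable
    rw [uIcc_of_le ht.1]
    exact (hDc i).mono (hsub t ht)
  have hftc : ∀ t ∈ Icc (0:ℝ) T, ∀ i, h t i = ∫ s in (0:ℝ)..t, D s i := by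
    intro t ht i
    have key : ∫ s in (0:ℝ)..t, D s i = h t i - h 0 i := by
      apply intervalIntegral.integral_eq_sub_of_hasDerivAt
      · intro s hs
        rw [uIcc_of_le ht.1] at hs
        exact hh s (hsub t ht hs) i
      · exact hDint t ht i
    rw [hh0] at key
    simp at key
    rw [key]
  -- pointwise bound on evnorm (D s)
  have hDbound : ∀ s ∈ Icc (0:ℝ) T, evnorm (D s) ≤ M * φ s + f₀ s := by
    intro s hs
    have h1 : evnorm (D s) ≤ evnorm (((A s)ᵀ + (1 / lam) • E s).mulVec (h s))
        + evnorm (Cᵀ.mulVec (Y s) + (E s).mulVec (r s)) := by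
      rw [show D s = -(((A s)ᵀ + (1 / lam) • E s).mulVec (h s))
          - (Cᵀ.mulVec (Y s) + (E s).mulVec (r s)) from rfl]
      calc evnorm _ ≤ evnorm (-(((A s)ᵀ + (1 / lam) • E s).mulVec (h s)))
            + evnorm (Cᵀ.mulVec (Y s) + (E s).mulVec (r s)) := evnorm_sub_le _ _
        _ = _ := by rw [evnorm_neg]
    have hfrobB : frob ((A s)ᵀ + (1 / lam) • E s) ≤ M := by
      calc frob ((A s)ᵀ + (1 / lam) • E s) ≤ frob (A s)ᵀ + frob ((1 / lam) • E s) :=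
            frob_add_le _ _
        _ = frob (A s) + (1 / lam) * frob (E s) := by
            rw [frob_transpose, frob_smul, abs_of_pos (by positivity : (0:ℝ) < 1 / lam)]
        _ ≤ Abar + (1 / lam) * Ebar := by
            have := hAb s hs
            have h2 := hEb s hs
            have h3 : 0 < 1 / lam := by positivity
            nlinarith
        _ = M := by rw [hMdef]; ring
    have h2 : evnorm (((A s)ᵀ + (1 / lam) • E s).mulVec (h s)) ≤ M * φ s := by
      calc evnorm _ ≤ frob ((A s)ᵀ + (1 / lam) • E s) * evnorm (h s) :=
            evnorm_mulVec_le _ _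
        _ ≤ M * φ s := mul_le_mul_of_nonneg_right hfrobB (evnorm_nonneg _)
    have h3 : evnorm (Cᵀ.mulVec (Y s) + (E s).mulVec (r s)) ≤ f₀ s := by
      calc evnorm _ ≤ evnorm (Cᵀ.mulVec (Y s)) + evnorm ((E s).mulVec (r s)) :=
            evnorm_add_le _ _
        _ ≤ frob Cᵀ * evnorm (Y s) + frob (E s) * evnorm (r s) :=
            add_le_add (evnorm_mulVec_le _ _) (evnorm_mulVec_le _ _)
        _ ≤ frob C * evnorm (Y s) + Ebar * evnorm (r s) := by
            rw [frob_transpose]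
            exact add_le_add le_rfl
              (mul_le_mul_of_nonneg_right (hEb s hs) (evnorm_nonneg _))
        _ = f₀ s := rfl
    exact h1.trans (add_le_add h2 h3)
  -- integrabilities
  have hevDc : ContinuousOn (fun s => evnorm (D s)) (Icc 0 T) := continuousOn_evnorm hDc
  have hGc : ContinuousOn (fun s => M * φ s + f₀ s) (Icc 0 T) :=
    (continuousOn_const.mul hφc).add hf₀c
  -- the integral inequality for φ
  have hkey : ∀ t ∈ Icc (0:ℝ) T, φ t ≤ ∫ s in (0:ℝ)..t, (M * φ s + f₀ s) := by
    intro t ht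
    have hevDint : IntervalIntegrable (fun s => evnorm (D s)) MeasureTheory.volume 0 t := by
      apply ContinuousOn.intervalIntegrable
      rw [uIcc_of_le ht.1]
      exact hevDc.mono (hsub t ht)
    have hGint : IntervalIntegrable (fun s => M * φ s + f₀ s) MeasureTheory.volume 0 t := by
      apply ContinuousOn.intervalIntegrable
      rw [uIcc_of_le ht.1]
      exact hGc.mono (hsub t ht)
    have hsq : φ t ^ 2 ≤ φ t * ∫ s in (0:ℝ)..t, evnorm (D s) := by
      have e1 : φ t ^ 2 = ∑ i, h t i * h t i := by
        rw [hφ]; rw [evnorm_sq]; exact Finset.sum_congr rfl fun i _ => sq (h t i) ▸ by ring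
      have e2 : ∑ i, h t i * h t i = ∑ i, ∫ s in (0:ℝ)..t, h t i * D s i := by
        refine Finset.sum_congr rfl fun i _ => ?_
        rw [intervalIntegral.integral_const_mul, ← hftc t ht i]
      have e3 : ∑ i, ∫ s in (0:ℝ)..t, h t i * D s i
          = ∫ s in (0:ℝ)..t, ∑ i, h t i * D s i := by
        rw [intervalIntegral.integral_finset_sum]
        intro i _
        exact (hDint t ht i).const_mul _
      have e4 : ∫ s in (0:ℝ)..t, (∑ i, h t i * D s i)
          ≤ ∫ s in (0:ℝ)..t, φ t * evnorm (D s) := by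
        apply intervalIntegral.integral_mono_on ht.1
        · apply ContinuousOn.intervalIntegrable
          rw [uIcc_of_le ht.1]
          exact continuousOn_finset_sum _ fun i _ =>
            continuousOn_const.mul ((hDc i).mono (hsub t ht))
        · exact hevDint.const_mul _
        · intro s _
          exact sum_mul_le_evnorm (h t) (D s)
      rw [e1, e2, e3]
      calc _ ≤ ∫ s in (0:ℝ)..t, φ t * evnorm (D s) := e4
        _ = φ t * ∫ s in (0:ℝ)..t, evnorm (D s) := intervalIntegral.integral_const_mul _ _
    have hInt_mono : ∫ s in (0:ℝ)..t, evnorm (D s) ≤ ∫ s in (0:ℝ)..t, (M * φ s + f₀ s) := by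
      apply intervalIntegral.integral_mono_on ht.1 hevDint hGint
      intro s hs
      exact hDbound s (hsub t ht hs)
    rcases eq_or_lt_of_le (evnorm_nonneg (h t)) with h0 | hpos
    · have h0' : φ t = 0 := h0.symm
      rw [h0']
      apply intervalIntegral.integral_nonneg ht.1
      intro s hs
      have hs' := hsub t ht hs
      have : 0 ≤ φ s := evnorm_nonneg _
      have := hf₀0 s hs'
      nlinarith
    · have hφt : φ t ≤ ∫ s in (0:ℝ)..t, evnorm (D s) := by
        have h2 : φ t * φ t ≤ φ t * ∫ s in (0:ℝ)..t, evnorm (D s) := by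
          nlinarith [hsq]
        exact le_of_mul_le_mul_left h2 hpos
      linarith
  -- Gronwall
  have hgron := gronwall_aux hT hM hφc hf₀c hf₀0 hkey
  -- bound the integral of f₀
  have hYc : ContinuousOn (fun s => evnorm (Y s)) (Icc 0 T) := continuousOn_evnorm hY
  have hrc : ContinuousOn (fun s => evnorm (r s)) (Icc 0 T) := continuousOn_evnorm hr
  have hYint : IntervalIntegrable (fun s => evnorm (Y s)) MeasureTheory.volume 0 T := by
    apply ContinuousOn.intervalIntegrable; rw [uIcc_of_le hT.le]; exact hYc
  have hrint : IntervalIntegrable (fun s => evnorm (r s)) MeasureTheory.volume 0 T := by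
    apply ContinuousOn.intervalIntegrable; rw [uIcc_of_le hT.le]; exact hrc
  have hsplit : ∫ s in (0:ℝ)..T, f₀ s
      = frob C * (∫ s in (0:ℝ)..T, evnorm (Y s)) + Ebar * ∫ s in (0:ℝ)..T, evnorm (r s) := by
    rw [hf₀]
    rw [intervalIntegral.integral_add (hYint.const_mul _) (hrint.const_mul _),
      intervalIntegral.integral_const_mul, intervalIntegral.integral_const_mul]
  have hCS_Y : ∫ s in (0:ℝ)..T, evnorm (Y s)
      ≤ Real.sqrt T * Real.sqrt (∫ s in (0:ℝ)..T, evnorm (Y s) ^ 2) :=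
    integral_le_sqrt_mul_sqrt hT hYc (fun s _ => evnorm_nonneg _)
  have hCS_r : ∫ s in (0:ℝ)..T, evnorm (r s)
      ≤ Real.sqrt T * Real.sqrt (∫ s in (0:ℝ)..T, evnorm (r s) ^ 2) :=
    integral_le_sqrt_mul_sqrt hT hrc (fun s _ => evnorm_nonneg _)
  -- final assembly
  intro t ht
  have hmain : φ t ≤ Real.exp (M * T) *
      (frob C * (Real.sqrt T * Real.sqrt (∫ s in (0:ℝ)..T, evnorm (Y s) ^ 2))
       + Ebar * (Real.sqrt T * Real.sqrt (∫ s in (0:ℝ)..T, evnorm (r s) ^ 2))) := by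
    calc φ t ≤ Real.exp (M * T) * ∫ s in (0:ℝ)..T, f₀ s := hgron t ht
      _ ≤ _ := by
        apply mul_le_mul_of_nonneg_left _ (Real.exp_pos _).le
        rw [hsplit]
        exact add_le_add (mul_le_mul_of_nonneg_left hCS_Y hC0)
          (mul_le_mul_of_nonneg_left hCS_r hEbar)
  have hsqrtd : (1:ℝ) ≤ Real.sqrt d := by
    rw [show (1:ℝ) = Real.sqrt 1 by simp]
    exact Real.sqrt_le_sqrt (by exact_mod_cast hd)
  have hX : Real.exp (M * T) ≤ Real.exp (Real.sqrt d * M * T) := by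
    apply Real.exp_le_exp.mpr
    nlinarith [mul_nonneg hM hT.le]
  have hd2 : (1:ℝ) ≤ (d:ℝ) ^ 2 := by
    have : (1:ℝ) ≤ (d:ℝ) := by exact_mod_cast hd
    nlinarith
  have hsT : Real.sqrt T ≤ Real.sqrt (d * T) := by
    apply Real.sqrt_le_sqrt
    have : (1:ℝ) ≤ (d:ℝ) := by exact_mod_cast hd
    nlinarith
  set X := Real.exp (Real.sqrt d * M * T) with hXdef
  set IY := Real.sqrt (∫ s in (0:ℝ)..T, evnorm (Y s) ^ 2) with hIY
  set Ir := Real.sqrt (∫ s in (0:ℝ)..T, evnorm (r s) ^ 2) with hIr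
  have hIY0 : 0 ≤ IY := Real.sqrt_nonneg _
  have hIr0 : 0 ≤ Ir := Real.sqrt_nonneg _
  have hX0 : 0 ≤ X := (Real.exp_pos _).le
  have hT0 : 0 ≤ Real.sqrt T := Real.sqrt_nonneg _
  have step : Real.exp (M * T) * (frob C * (Real.sqrt T * IY) + Ebar * (Real.sqrt T * Ir))
      ≤ Real.sqrt T * (d:ℝ) ^ 2 * frob C * X * IY + Real.sqrt (d * T) * Ebar * X * Ir := by
    have hterm : Real.exp (M * T) * (frob C * (Real.sqrt T * IY) + Ebar * (Real.sqrt T * Ir))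
        ≤ X * (frob C * (Real.sqrt T * IY)) + X * (Ebar * (Real.sqrt T * Ir)) := by
      rw [← mul_add]
      apply mul_le_mul_of_nonneg_right hX
      positivity
    refine hterm.trans (add_le_add ?_ ?_)
    · calc X * (frob C * (Real.sqrt T * IY)) = Real.sqrt T * 1 * frob C * X * IY := by ring
        _ ≤ Real.sqrt T * (d:ℝ) ^ 2 * frob C * X * IY := by
          apply mul_le_mul_of_nonneg_right _ hIY0
          apply mul_le_mul_of_nonneg_right _ hX0
          apply mul_le_mul_of_nonneg_right _ hC0
          apply mul_le_mul_of_nonneg_left hd2 hT0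
    · calc X * (Ebar * (Real.sqrt T * Ir)) = Real.sqrt T * Ebar * X * Ir := by ring
        _ ≤ Real.sqrt (d * T) * Ebar * X * Ir := by
          apply mul_le_mul_of_nonneg_right _ hIr0
          apply mul_le_mul_of_nonneg_right _ hX0
          apply mul_le_mul_of_nonneg_right hsT hEbar
  exact hmain.trans step
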